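/- Let L_w be the dual Laplacian of a connected dual number weighted graph on n vertices. Then the dual Kirchhoff index Kf(G^w) = (1/2) Σ_{i,j} R_{ij}(G^w) equals n·tr(L_w†), and Kf(G^w) = Kf(G) - n·tr(L† L̂ L†) ε, where Kf(G) = n·tr(L†). -/

import Mathlib

open Matrix

/-- The dual matrix `A_s + A_d ε` built from its standard and infinitesimal parts. -/
def dm {m n : Type*} (A B : Matrix m n ℝ) : Matrix m n (DualNumber ℝ) :=
  Matrix.of fun i j => TrivSqZeroExt.inl (A i j) + TrivSqZeroExt.inr (B i j)

lemma aux_sum {n : ℕ} (A : Matrix (Fin n) (Fin n) ℝ) (h : ∀ i, ∑ j, A i j = 0) :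
    (2:ℝ)⁻¹ * ∑ i, ∑ j, (A i i + A j j - 2 * A i j) = n * A.trace := by
  have : ∀ i : Fin n, ∑ j, (A i i + A j j - 2 * A i j)
      = (n : ℝ) * A i i + A.trace := by
    intro i
    rw [Finset.sum_sub_distrib, Finset.sum_add_distrib, Finset.sum_const,
      ← Finset.mul_sum, h i, Matrix.trace]
    simp [Matrix.diag, mul_comm]
  simp_rw [this, Finset.sum_add_distrib, Finset.sum_const, ← Finset.mul_sum,
    Matrix.trace, Matrix.diag]
  simp
  ring

/-- The dual Kirchhoff index `Kf(G^w) = (1/2) ∑_{i,j} R_{ij}(G^w)` equals `n·tr(L_w†)`,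
and `Kf(G^w) = Kf(G) - n·tr(L† L̂ L†) ε` with `Kf(G) = n·tr(L†)`. -/
theorem dual_kirchhoff_index_formula {n : ℕ} (hn : 0 < n)
    (G : SimpleGraph (Fin n)) [DecidableRel G.Adj] (hG : G.Connected)
    (Lhat : Matrix (Fin n) (Fin n) ℝ) (hsym : Lhatᵀ = Lhat)
    (hrow : Lhat *ᵥ (fun _ => (1 : ℝ)) = 0)
    (hcol : (fun _ => (1 : ℝ)) ᵥ* Lhat = 0)
    (Ld : Matrix (Fin n) (Fin n) ℝ)
    (h1 : G.lapMatrix ℝ * Ld * G.lapMatrix ℝ = G.lapMatrix ℝ)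
    (h2 : Ld * G.lapMatrix ℝ * Ld = Ld)
    (h3 : (G.lapMatrix ℝ * Ld)ᵀ = G.lapMatrix ℝ * Ld)
    (h4 : (Ld * G.lapMatrix ℝ)ᵀ = Ld * G.lapMatrix ℝ)
    (Lw Lwd : Matrix (Fin n) (Fin n) (DualNumber ℝ))
    (hLw : Lw = dm (G.lapMatrix ℝ) Lhat)
    (hmp1 : Lw * Lwd * Lw = Lw) (hmp2 : Lwd * Lw * Lwd = Lwd)
    (hmp3 : (Lw * Lwd)ᵀ = Lw * Lwd) (hmp4 : (Lwd * Lw)ᵀ = Lwd * Lw)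
    (hLwd : Lwd = dm Ld (-(Ld * Lhat * Ld))) :
    (2 : ℝ)⁻¹ • ∑ i : Fin n, ∑ j : Fin n, (Lwd i i + Lwd j j - 2 * Lwd i j)
        = (n : ℝ) • Lwd.trace ∧
      (2 : ℝ)⁻¹ • ∑ i : Fin n, ∑ j : Fin n, (Lwd i i + Lwd j j - 2 * Lwd i j)
        = TrivSqZeroExt.inl ((n : ℝ) * Ld.trace)
          - TrivSqZeroExt.inr ((n : ℝ) * (Ld * Lhat * Ld).trace) := by
  have hL1 : G.lapMatrix ℝ *ᵥ (fun _ => (1 : ℝ)) = 0 :=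
    G.lapMatrix_mulVec_const_eq_zero
  have hLsym : (G.lapMatrix ℝ)ᵀ = G.lapMatrix ℝ := G.isSymm_lapMatrix ℝ
  have hLLd1 : (G.lapMatrix ℝ * Ld) *ᵥ (fun _ => (1 : ℝ)) = 0 := by
    rw [← h3, Matrix.transpose_mul, hLsym, ← Matrix.mulVec_mulVec, hL1,
      Matrix.mulVec_zero]
  have hLd1 : Ld *ᵥ (fun _ => (1 : ℝ)) = 0 := by
    conv_lhs => rw [← h2]
    rw [mul_assoc, ← Matrix.mulVec_mulVec, hLLd1, Matrix.mulVec_zero]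
  have hM1 : (Ld * Lhat * Ld) *ᵥ (fun _ => (1 : ℝ)) = 0 := by
    rw [← Matrix.mulVec_mulVec, hLd1, Matrix.mulVec_zero]
  have hrowLd : ∀ i, ∑ j, Ld i j = 0 := by
    intro i
    have := congrFun hLd1 i
    simpa [Matrix.mulVec, dotProduct] using this
  have hrowM : ∀ i, ∑ j, (-(Ld * Lhat * Ld)) i j = 0 := by
    intro i
    have := congrFun hM1 i
    simp only [Matrix.neg_apply, Finset.sum_neg_distrib, neg_eq_zero]
    simpa [Matrix.mulVec, dotProduct] using this
  have key : (2 : ℝ)⁻¹ • ∑ i : Fin n, ∑ j : Fin n, (Lwd i i + Lwd j j - 2 * Lwd i j)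
        = TrivSqZeroExt.inl ((n : ℝ) * Ld.trace)
          - TrivSqZeroExt.inr ((n : ℝ) * (Ld * Lhat * Ld).trace) := by
    subst hLwd
    apply TrivSqZeroExt.ext
    · simp only [TrivSqZeroExt.fst_smul, TrivSqZeroExt.fst_sub, TrivSqZeroExt.fst_sum,
        TrivSqZeroExt.fst_add, TrivSqZeroExt.fst_inl, TrivSqZeroExt.fst_inr, dm,
        Matrix.of_apply, two_mul, TrivSqZeroExt.snd_inl, TrivSqZeroExt.snd_inr,
        add_zero, zero_add, smul_eq_mul]
      have e : ∀ i j : Fin n, Ld i i + Ld j j - (Ld i j + Ld i j)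
          = Ld i i + Ld j j - 2 * Ld i j := by intro i j; ring
      simp_rw [e]
      rw [sub_zero]
      exact aux_sum Ld hrowLd
    · simp only [TrivSqZeroExt.snd_smul, TrivSqZeroExt.snd_sub, TrivSqZeroExt.snd_sum,
        TrivSqZeroExt.snd_add, TrivSqZeroExt.fst_inl, TrivSqZeroExt.fst_inr, dm,
        Matrix.of_apply, two_mul, TrivSqZeroExt.snd_inl, TrivSqZeroExt.snd_inr,
        add_zero, zero_add, smul_eq_mul]
      have e : ∀ i j : Fin n, (-(Ld * Lhat * Ld)) i i + (-(Ld * Lhat * Ld)) j j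
            - ((-(Ld * Lhat * Ld)) i j + (-(Ld * Lhat * Ld)) i j)
          = (-(Ld * Lhat * Ld)) i i + (-(Ld * Lhat * Ld)) j j
            - 2 * (-(Ld * Lhat * Ld)) i j := by intro i j; ring
      simp_rw [e]
      have := aux_sum (-(Ld * Lhat * Ld)) hrowM
      rw [Matrix.trace_neg, mul_neg] at this
      rw [this, zero_sub]
  refine ⟨?_, key⟩
  rw [key]
  apply TrivSqZeroExt.ext
  · simp [Matrix.trace, Matrix.diag, hLwd, dm, TrivSqZeroExt.fst_sum, Finset.mul_sum]
  · simp [Matrix.trace, Matrix.diag, hLwd, dm, TrivSqZeroExt.snd_sum, Finset.mul_sum]
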